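/- Let P, Q, L be real n×n matrices with P = Pᵀ, Q = Qᵀ and L invertible, let S_W = [[L⁻¹Q, L⁻¹],[P·L⁻¹·Q − Lᵀ, P·L⁻¹]], and assume W_xx = P + Q − L − Lᵀ is invertible. Then the sign of det(S_W − I) equals (−1)^(n + Inert W_xx) times the sign of det L, where Inert W_xx is the number of negative eigenvalues of the symmetric matrix W_xx counted with multiplicity. -/

import Mathlib

open Matrix

/-- The free symplectic matrix `S_W = [[L⁻¹Q, L⁻¹],[P L⁻¹ Q - Lᵀ, P L⁻¹]]`. -/
noncomputable def freeSymplectic {n : ℕ} (P L Q : Matrix (Fin n) (Fin n) ℝ) :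
    Matrix (Fin n ⊕ Fin n) (Fin n ⊕ Fin n) ℝ :=
  Matrix.fromBlocks (L⁻¹ * Q) L⁻¹ (P * L⁻¹ * Q - Lᵀ) (P * L⁻¹)

lemma real_sign_mul (x y : ℝ) : Real.sign (x * y) = Real.sign x * Real.sign y := by
  rcases lt_trichotomy x 0 with hx | hx | hx <;>
    rcases lt_trichotomy y 0 with hy | hy | hy <;>
    simp [hx, hy, Real.sign_of_pos, Real.sign_of_neg, Real.sign_zero,
      mul_pos_of_neg_of_neg, mul_pos, mul_neg_of_neg_of_pos, mul_neg_of_pos_of_neg]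

lemma real_sign_pow_neg_one (k : ℕ) : Real.sign ((-1 : ℝ) ^ k) = (-1 : ℝ) ^ k := by
  rcases Nat.even_or_odd k with h | h
  · rw [h.neg_one_pow]; exact Real.sign_one
  · rw [h.neg_one_pow]; simpa using Real.sign_of_neg (by norm_num : (-1 : ℝ) < 0)

lemma real_sign_inv (x : ℝ) : Real.sign x⁻¹ = Real.sign x := by
  rcases lt_trichotomy x 0 with hx | hx | hx <;>
    simp [hx, Real.sign_of_pos, Real.sign_of_neg, inv_pos, inv_neg'']

/-- with `W_xx = P + Q - L - Lᵀ` invertible, the sign of `det (S_W - I)` equals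
`(-1)^(n + Inert W_xx)` times the sign of `det L`, where `Inert W_xx` is the number of
negative eigenvalues of the symmetric matrix `W_xx`, counted with multiplicity. -/
theorem sign_det_SW_sub_one {n : ℕ} (P L Q : Matrix (Fin n) (Fin n) ℝ)
    (hP : Pᵀ = P) (hQ : Qᵀ = Q) (hL : L.det ≠ 0)
    (hWsym : (P + Q - L - Lᵀ).IsHermitian) (hW : (P + Q - L - Lᵀ).det ≠ 0) :
    Real.sign (freeSymplectic P L Q - 1).det
      = (-1 : ℝ) ^ (n + (Finset.univ.filter fun i => hWsym.eigenvalues i < 0).card)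
          * Real.sign L.det := by
  have hLinv : L * L⁻¹ = 1 := Matrix.mul_nonsing_inv L (isUnit_iff_ne_zero.mpr hL)
  -- Step 1: block form of S_W - 1
  have h1 : freeSymplectic P L Q - 1
      = fromBlocks (L⁻¹ * Q - 1) L⁻¹ (P * L⁻¹ * Q - Lᵀ) (P * L⁻¹ - 1) := by
    rw [freeSymplectic, ← fromBlocks_one]
    ext (i | i) (j | j) <;> simp [fromBlocks]
  -- Step 2: factorization
  have hC : (P - L) * (L⁻¹ * Q - 1) + (P + Q - L - Lᵀ) = P * L⁻¹ * Q - Lᵀ := by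
    simp only [Matrix.sub_mul, Matrix.mul_sub, Matrix.mul_one, Matrix.one_mul,
      ← Matrix.mul_assoc, hLinv]
    noncomm_ring
  have hD : (P - L) * L⁻¹ = P * L⁻¹ - 1 := by
    rw [Matrix.sub_mul, hLinv]
  have h2 : fromBlocks (L⁻¹ * Q - 1) L⁻¹ (P * L⁻¹ * Q - Lᵀ) (P * L⁻¹ - 1)
      = fromBlocks 1 0 (P - L) 1 * fromBlocks (L⁻¹ * Q - 1) L⁻¹ (P + Q - L - Lᵀ) 0 := by
    rw [fromBlocks_multiply]
    simp only [Matrix.one_mul, Matrix.zero_mul, Matrix.mul_zero, add_zero, hC, hD]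
  -- Step 3/4: determinant of the second factor
  have hWinv : (P + Q - L - Lᵀ) * (P + Q - L - Lᵀ)⁻¹ = 1 :=
    Matrix.mul_nonsing_inv _ (isUnit_iff_ne_zero.mpr hW)
  have hWinv' : (P + Q - L - Lᵀ)⁻¹ * (P + Q - L - Lᵀ) = 1 :=
    Matrix.nonsing_inv_mul _ (isUnit_iff_ne_zero.mpr hW)
  have key : fromBlocks (L⁻¹ * Q - 1) L⁻¹ (P + Q - L - Lᵀ) 0
        * fromBlocks 1 (P + Q - L - Lᵀ)⁻¹ 0 1
      = fromBlocks (L⁻¹ * Q - 1) ((L⁻¹ * Q - 1) * (P + Q - L - Lᵀ)⁻¹ + L⁻¹)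
          (P + Q - L - Lᵀ) 1 := by
    rw [fromBlocks_multiply]
    simp only [Matrix.mul_one, Matrix.mul_zero, Matrix.zero_mul, add_zero, zero_add, hWinv]
  have h4 : (fromBlocks (L⁻¹ * Q - 1) L⁻¹ (P + Q - L - Lᵀ) 0).det
      = (-1 : ℝ) ^ n * (L⁻¹.det * (P + Q - L - Lᵀ).det) := by
    have hd := congrArg Matrix.det key
    rw [Matrix.det_mul, Matrix.det_fromBlocks_zero₂₁, Matrix.det_one, one_mul, mul_one,
      Matrix.det_fromBlocks_one₂₂] at hd
    rw [hd, Matrix.add_mul, Matrix.mul_assoc, hWinv', Matrix.mul_one]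
    have : L⁻¹ * Q - 1 - (L⁻¹ * Q - 1 + L⁻¹ * (P + Q - L - Lᵀ))
        = -(L⁻¹ * (P + Q - L - Lᵀ)) := by abel
    rw [this, Matrix.det_neg, Matrix.det_mul]
    simp
  have h5 : (freeSymplectic P L Q - 1).det
      = (-1 : ℝ) ^ n * ((L.det)⁻¹ * (P + Q - L - Lᵀ).det) := by
    rw [h1, h2, Matrix.det_mul, Matrix.det_fromBlocks_zero₁₂, Matrix.det_one, one_mul,
      one_mul, h4, Matrix.det_nonsing_inv, Ring.inverse_eq_inv']
  -- sign of det W from eigenvalues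
  have heig : ∀ i, hWsym.eigenvalues i ≠ 0 := by
    intro i hi
    apply hW
    rw [hWsym.det_eq_prod_eigenvalues]
    exact Finset.prod_eq_zero (Finset.mem_univ i) (by exact_mod_cast hi)
  have hsignW : Real.sign (P + Q - L - Lᵀ).det
      = (-1 : ℝ) ^ (Finset.univ.filter fun i => hWsym.eigenvalues i < 0).card := by
    rw [hWsym.det_eq_prod_eigenvalues]
    push_cast
    have : ∀ i ∈ Finset.univ, Real.sign (hWsym.eigenvalues i)
        = if hWsym.eigenvalues i < 0 then (-1 : ℝ) else 1 := by
      intro i _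
      rcases lt_trichotomy (hWsym.eigenvalues i) 0 with h | h | h
      · simp [h, Real.sign_of_neg h]
      · exact absurd h (heig i)
      · simp [Real.sign_of_pos h, not_lt.mpr h.le]
    calc Real.sign (∏ i, hWsym.eigenvalues i)
        = ∏ i, Real.sign (hWsym.eigenvalues i) := by
          induction (Finset.univ : Finset (Fin n)) using Finset.induction with
          | empty => simp [Real.sign_one]
          | insert _ _ h ih => rw [Finset.prod_insert h, Finset.prod_insert h,
              real_sign_mul, ih]
      _ = ∏ i, (if hWsym.eigenvalues i < 0 then (-1 : ℝ) else 1) :=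
          Finset.prod_congr rfl this
      _ = (-1 : ℝ) ^ (Finset.univ.filter fun i => hWsym.eigenvalues i < 0).card := by
          rw [Finset.prod_ite, Finset.prod_const, Finset.prod_const]
          simp
  rw [h5, real_sign_mul, real_sign_mul, real_sign_pow_neg_one, real_sign_inv, hsignW,
    pow_add]
  ring
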